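/- Let R be a commutative ring, n a positive integer, A, B ∈ Mₙ(R), and let T := fromBlocks 0 A B 0 be the corresponding 2n×2n block matrix. If h ∈ R[X] satisfies h(A·B) = 0, then T · h(T²) = 0; equivalently, the polynomial X · h(X²) annihilates T. In particular, over a field the minimal polynomial of T divides X · m(X²), where m is the minimal polynomial of A·B. -/
import Mathlib


open Polynomial Matrix

private lemma fromBlocks_diag_pow {R : Type*} [CommRing R] {n : ℕ}
    (M N : Matrix (Fin n) (Fin n) R) (k : ℕ) :
    (fromBlocks M 0 0 N) ^ k = fromBlocks (M ^ k) 0 0 (N ^ k) := by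
  induction k with
  | zero => simp [Matrix.fromBlocks_one]
  | succ k ih =>
    rw [pow_succ, pow_succ, pow_succ, ih, Matrix.fromBlocks_multiply]
    simp

private lemma aeval_fromBlocks_diag {R : Type*} [CommRing R] {n : ℕ}
    (M N : Matrix (Fin n) (Fin n) R) (p : Polynomial R) :
    aeval (fromBlocks M 0 0 N) p = fromBlocks (aeval M p) 0 0 (aeval N p) := by
  induction p using Polynomial.induction_on' with
  | add p q hp hq => simp [hp, hq, Matrix.fromBlocks_add]
  | monomial k a =>
    simp only [aeval_monomial, fromBlocks_diag_pow, Algebra.algebraMap_eq_smul_one,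
      smul_mul_assoc, one_mul, Matrix.fromBlocks_smul, smul_zero]

private lemma semiconj_aeval {R : Type*} [CommRing R] {n : ℕ}
    (A B : Matrix (Fin n) (Fin n) R) (h : Polynomial R) :
    A * aeval (B * A) h = aeval (A * B) h * A := by
  induction h using Polynomial.induction_on' with
  | add p q hp hq => rw [map_add, map_add, mul_add, add_mul, hp, hq]
  | monomial k a =>
    have hs : SemiconjBy A (B * A) (A * B) := by
      unfold SemiconjBy; rw [← mul_assoc]
    have hk := (hs.pow_right k).eq
    simp only [aeval_monomial, Algebra.algebraMap_eq_smul_one, smul_mul_assoc,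
      one_mul, mul_smul_comm, hk]

private lemma fromBlocks_main {R : Type*} [CommRing R] {n : ℕ}
    (A B : Matrix (Fin n) (Fin n) R) (h : Polynomial R)
    (hAB : Polynomial.aeval (A * B) h = 0) :
    (Matrix.fromBlocks 0 A B 0) *
        Polynomial.aeval ((Matrix.fromBlocks 0 A B 0) ^ 2) h = 0 ∧
    Polynomial.aeval (Matrix.fromBlocks 0 A B 0)
        (Polynomial.X * h.comp (Polynomial.X ^ 2)) = 0 := by
  have hsq : (Matrix.fromBlocks 0 A B 0) ^ 2 =
      fromBlocks (A * B) 0 0 (B * A) := by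
    rw [sq, Matrix.fromBlocks_multiply]; simp
  have key : (Matrix.fromBlocks 0 A B 0) *
      Polynomial.aeval ((Matrix.fromBlocks 0 A B 0) ^ 2) h = 0 := by
    rw [hsq, aeval_fromBlocks_diag, hAB, Matrix.fromBlocks_multiply]
    have hBA : A * aeval (B * A) h = 0 := by
      rw [semiconj_aeval, hAB, zero_mul]
    simp [hBA]
  refine ⟨key, ?_⟩
  rw [_root_.map_mul, aeval_X, aeval_comp, map_pow, aeval_X, key]

theorem fromBlocks_annihilating :
    (∀ (R : Type*) [CommRing R] (n : ℕ), 0 < n →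
      ∀ (A B : Matrix (Fin n) (Fin n) R) (h : Polynomial R),
        Polynomial.aeval (A * B) h = 0 →
          (Matrix.fromBlocks 0 A B 0) *
              Polynomial.aeval ((Matrix.fromBlocks 0 A B 0) ^ 2) h = 0 ∧
          Polynomial.aeval (Matrix.fromBlocks 0 A B 0)
              (Polynomial.X * h.comp (Polynomial.X ^ 2)) = 0) ∧
    (∀ (K : Type*) [Field K] (n : ℕ), 0 < n →
      ∀ (A B : Matrix (Fin n) (Fin n) K),
        minpoly K (Matrix.fromBlocks 0 A B 0) ∣
          Polynomial.X * (minpoly K (A * B)).comp (Polynomial.X ^ 2)) := by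
  constructor
  · intro R _ n _ A B h hAB
    exact fromBlocks_main A B h hAB
  · intro K _ n hn A B
    apply minpoly.dvd
    exact (fromBlocks_main A B (minpoly K (A * B)) (minpoly.aeval _ _)).2
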